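/- Let Δ be the complete fan in ℝ² whose rays are spanned by (1,1), (1,−1), (−1,−1), (−1,1) and whose maximal cones are the four cones spanned by adjacent pairs. With equivariant multiplicities e_{σ₁} = e_{σ₃} = 2/(a²−b²) and e_{σ₂} = e_{σ₄} = −2/(a²−b²) (where σ₁,σ₃ contain the ±x-axes and σ₂,σ₄ contain the ±y-axes, a,b the standard coordinates on the dual), for any quadruple of homogeneous degree-2 polynomials f₁,f₂,f₃,f₄ ∈ ℤ[a,b] agreeing on the shared rays (i.e., forming a piecewise polynomial of degree 2 on Δ), the sum ∑ᵢ e_{σᵢ} fᵢ is an even integer; and there exists such a piecewise polynomial with ∑ᵢ e_{σᵢ} fᵢ = 2. -/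

import Mathlib

set_option maxHeartbeats 1000000

open MvPolynomial

lemma fin2_eq_iff (m n : Fin 2 →₀ ℕ) : m = n ↔ m 0 = n 0 ∧ m 1 = n 1 := by
  constructor
  · rintro rfl; exact ⟨rfl, rfl⟩
  · rintro ⟨h0, h1⟩; ext i; fin_cases i <;> assumption

lemma fin2_degree (m : Fin 2 →₀ ℕ) : m.degree = m 0 + m 1 := by
  rw [Finsupp.degree_apply, Finset.sum_subset (Finset.subset_univ m.support)
    (by intro x _ hx; simpa using Finsupp.notMem_support_iff.mp hx)]
  simp [Fin.sum_univ_two]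

lemma quad_struct (p : MvPolynomial (Fin 2) ℤ) (hp : p.IsHomogeneous 2) :
    p = C (p.coeff (Finsupp.single 0 2)) * X 0 ^ 2
      + C (p.coeff (Finsupp.single 0 1 + Finsupp.single 1 1)) * (X 0 * X 1)
      + C (p.coeff (Finsupp.single 1 2)) * X 1 ^ 2 := by
  ext m
  rw [show (X 0 : MvPolynomial (Fin 2) ℤ) ^ 2 = monomial (Finsupp.single 0 2) 1 from
    X_pow_eq_monomial,
    show (X 0 : MvPolynomial (Fin 2) ℤ) * X 1
      = monomial (Finsupp.single 0 1 + Finsupp.single 1 1) 1 by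
        rw [X, X, monomial_mul, one_mul],
    show (X 1 : MvPolynomial (Fin 2) ℤ) ^ 2 = monomial (Finsupp.single 1 2) 1 from
    X_pow_eq_monomial]
  simp only [coeff_add, coeff_C_mul, coeff_monomial, mul_ite, mul_one, mul_zero]
  by_cases hd : m.degree = 2
  · rw [fin2_degree] at hd
    have h0 : m 0 = 2 ∧ m 1 = 0 ∨ m 0 = 1 ∧ m 1 = 1 ∨ m 0 = 0 ∧ m 1 = 2 := by omega
    rcases h0 with ⟨h0, h1⟩ | ⟨h0, h1⟩ | ⟨h0, h1⟩
    · have hm : m = Finsupp.single 0 2 := (fin2_eq_iff m _).mpr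
        (by simp [Finsupp.single_apply, h0, h1])
      subst hm
      rw [if_pos rfl,
        if_neg (by simp [fin2_eq_iff, Finsupp.single_apply]),
        if_neg (by simp [fin2_eq_iff, Finsupp.single_apply])]
      ring
    · have hm : m = Finsupp.single 0 1 + Finsupp.single 1 1 := (fin2_eq_iff m _).mpr
        (by simp [Finsupp.single_apply, h0, h1])
      subst hm
      rw [if_pos rfl,
        if_neg (by simp [fin2_eq_iff, Finsupp.single_apply]),
        if_neg (by simp [fin2_eq_iff, Finsupp.single_apply])]
      ring
    · have hm : m = Finsupp.single 1 2 := (fin2_eq_iff m _).mpr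
        (by simp [Finsupp.single_apply, h0, h1])
      subst hm
      rw [if_pos rfl,
        if_neg (by simp [fin2_eq_iff, Finsupp.single_apply]),
        if_neg (by simp [fin2_eq_iff, Finsupp.single_apply])]
      ring
  · rw [hp.coeff_eq_zero hd,
      if_neg (fun h => hd (by rw [← h, fin2_degree]; simp [Finsupp.single_apply])),
      if_neg (fun h => hd (by rw [← h, fin2_degree]; simp [Finsupp.single_apply])),
      if_neg (fun h => hd (by rw [← h, fin2_degree]; simp [Finsupp.single_apply]))]
    ring

/-- For the complete fan over the square with vertices `(±1,±1)`, with equivariant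
multiplicities `e_{σ₁} = e_{σ₃} = 2/(a²−b²)` and `e_{σ₂} = e_{σ₄} = −2/(a²−b²)`:
for every piecewise polynomial of degree 2 (homogeneous quadratics `f₁,…,f₄ ∈ ℤ[a,b]`
agreeing on the shared rays), the sum `∑ᵢ e_{σᵢ} fᵢ` is an even integer; and there is
such a piecewise polynomial with `∑ᵢ e_{σᵢ} fᵢ = 2`. -/
theorem stmt_10 :
    let K := FractionRing (MvPolynomial (Fin 2) ℤ)
    let A : K := algebraMap (MvPolynomial (Fin 2) ℤ) K (MvPolynomial.X 0)
    let B : K := algebraMap (MvPolynomial (Fin 2) ℤ) K (MvPolynomial.X 1)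
    let e : Fin 4 → K :=
      ![2 / (A ^ 2 - B ^ 2), -(2 / (A ^ 2 - B ^ 2)),
        2 / (A ^ 2 - B ^ 2), -(2 / (A ^ 2 - B ^ 2))]
    let PW : (Fin 4 → MvPolynomial (Fin 2) ℤ) → Prop := fun f =>
      (∀ i, (f i).IsHomogeneous 2) ∧
      (∀ t : ℤ, MvPolynomial.eval ![t, -t] (f 0) = MvPolynomial.eval ![t, -t] (f 1)) ∧
      (∀ t : ℤ, MvPolynomial.eval ![-t, -t] (f 1) = MvPolynomial.eval ![-t, -t] (f 2)) ∧
      (∀ t : ℤ, MvPolynomial.eval ![-t, t] (f 2) = MvPolynomial.eval ![-t, t] (f 3)) ∧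
      (∀ t : ℤ, MvPolynomial.eval ![t, t] (f 3) = MvPolynomial.eval ![t, t] (f 0))
    (∀ f, PW f → ∃ c : ℤ, Even c ∧
        ∑ i, e i * algebraMap (MvPolynomial (Fin 2) ℤ) K (f i) = (c : K)) ∧
    (∃ f, PW f ∧ ∑ i, e i * algebraMap (MvPolynomial (Fin 2) ℤ) K (f i) = 2) := by
  intro K A B e PW
  set φ := algebraMap (MvPolynomial (Fin 2) ℤ) K with hφ
  have hinj : Function.Injective φ := IsFractionRing.injective _ _
  have hD : A ^ 2 - B ^ 2 ≠ 0 := by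
    have : A ^ 2 - B ^ 2 = φ (X 0 ^ 2 - X 1 ^ 2) := by
      simp [A, B, map_sub, map_pow, hφ]
    rw [this]
    intro h
    have h2 : (X 0 ^ 2 - X 1 ^ 2 : MvPolynomial (Fin 2) ℤ) = 0 := hinj (by simpa using h)
    have h3 := congrArg (coeff (Finsupp.single 0 2)) h2
    rw [coeff_sub, show (X 0 : MvPolynomial (Fin 2) ℤ) ^ 2 = monomial (Finsupp.single 0 2) 1 from
      X_pow_eq_monomial, show (X 1 : MvPolynomial (Fin 2) ℤ) ^ 2
        = monomial (Finsupp.single 1 2) 1 from X_pow_eq_monomial] at h3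
    simp [coeff_monomial, fin2_eq_iff, Finsupp.single_apply] at h3
  constructor
  · rintro f ⟨hhom, h01, h12, h23, h30⟩
    set p : Fin 4 → ℤ := fun i => (f i).coeff (Finsupp.single 0 2) with hp
    set q : Fin 4 → ℤ := fun i => (f i).coeff (Finsupp.single 0 1 + Finsupp.single 1 1) with hq
    set r : Fin 4 → ℤ := fun i => (f i).coeff (Finsupp.single 1 2) with hr
    have hf : ∀ i, f i = C (p i) * X 0 ^ 2 + C (q i) * (X 0 * X 1) + C (r i) * X 1 ^ 2 :=
      fun i => quad_struct (f i) (hhom i)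
    have e01 := h01 1
    have e12 := h12 (-1)
    have e23 := h23 (-1)
    have e30 := h30 1
    rw [hf 0, hf 1] at e01
    rw [hf 1, hf 2] at e12
    rw [hf 2, hf 3] at e23
    rw [hf 3, hf 0] at e30
    simp only [map_add, map_mul, map_pow, eval_C, eval_X, Matrix.cons_val_zero,
      Matrix.cons_val_one, Matrix.head_cons] at e01 e12 e23 e30
    norm_num at e01 e12 e23 e30
    have hQ : q 0 - q 1 + q 2 - q 3 = 0 := by omega
    have hPR : r 0 - r 1 + r 2 - r 3 = -(p 0 - p 1 + p 2 - p 3) := by omega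
    refine ⟨2 * (p 0 - p 1 + p 2 - p 3), ⟨p 0 - p 1 + p 2 - p 3, by ring⟩, ?_⟩
    have hC : ∀ c : ℤ, φ (C c) = (c : K) := fun c => by
      rw [show φ (C c) = (φ.comp (C : ℤ →+* MvPolynomial (Fin 2) ℤ)) c from rfl,
        eq_intCast]
    have hφf : ∀ i, φ (f i) = (p i : K) * A ^ 2 + (q i : K) * (A * B) + (r i : K) * B ^ 2 := by
      intro i
      rw [hf i]
      simp only [map_add, map_mul, map_pow, hC]
      rfl
    have hQ' : (q 0 : K) - q 1 + q 2 - q 3 = 0 := by exact_mod_cast congrArg (Int.cast : ℤ → K) hQ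
    have hPR' : (r 0 : K) - r 1 + r 2 - r 3 = -((p 0 : K) - p 1 + p 2 - p 3) := by
      have := congrArg (Int.cast : ℤ → K) hPR; push_cast at this; exact this
    have h2 : φ (f 0) - φ (f 1) + φ (f 2) - φ (f 3)
        = ((p 0 : K) - p 1 + p 2 - p 3) * (A ^ 2 - B ^ 2) := by
      rw [hφf 0, hφf 1, hφf 2, hφf 3]
      linear_combination (A * B) * hQ' + (B ^ 2) * hPR'
    have h3 : ∑ i, e i * φ (f i)
        = 2 / (A ^ 2 - B ^ 2) * (φ (f 0) - φ (f 1) + φ (f 2) - φ (f 3)) := by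
      have he0 : e 0 = 2 / (A ^ 2 - B ^ 2) := rfl
      have he1 : e 1 = -(2 / (A ^ 2 - B ^ 2)) := rfl
      have he2 : e 2 = 2 / (A ^ 2 - B ^ 2) := rfl
      have he3 : e 3 = -(2 / (A ^ 2 - B ^ 2)) := rfl
      rw [Fin.sum_univ_four, he0, he1, he2, he3]
      ring
    rw [h3, h2, show 2 / (A ^ 2 - B ^ 2) * (((p 0 : K) - p 1 + p 2 - p 3) * (A ^ 2 - B ^ 2))
        = 2 / (A ^ 2 - B ^ 2) * (A ^ 2 - B ^ 2) * ((p 0 : K) - p 1 + p 2 - p 3) by ring,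
      div_mul_cancel₀ _ hD]
    rw [Int.cast_mul, Int.cast_ofNat, Int.cast_sub, Int.cast_add, Int.cast_sub]
  · refine ⟨![X 0 ^ 2 - X 1 ^ 2, 0, 0, 0], ⟨?_, ?_, ?_, ?_, ?_⟩, ?_⟩
    · intro i
      fin_cases i
      · exact (isHomogeneous_X_pow 0 2).sub (isHomogeneous_X_pow 1 2)
      all_goals exact isHomogeneous_zero _ _ _
    · intro t; simp [Matrix.cons_val_zero, Matrix.cons_val_one]
    · intro t; simp
    · intro t; simp
    · intro t; simp [Matrix.cons_val_zero, Matrix.cons_val_one]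
    · rw [Fin.sum_univ_four]
      simp only [Matrix.cons_val_zero, Matrix.cons_val_one, Matrix.head_cons,
        Matrix.cons_val_two, Matrix.cons_val_three, Matrix.tail_cons, map_zero, mul_zero,
        add_zero, map_sub, map_pow]
      rw [show φ (X 0) = A from rfl, show φ (X 1) = B from rfl]
      exact div_mul_cancel₀ 2 hD
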